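/- Let π: ℝ^n → ℝ^m be the projection onto a subset A of m coordinates, and let C ⊆ {0,1}^n be such that rad(π(C)) ≤ 1/2 − ε with respect to the normalized ℓ1-norm on the m coordinates. Then there exists C′ ⊆ C with |C′| ≥ |C|/2 and rad(C′) ≤ 1/2 − (m/n)ε. -/

import Mathlib

/-- if the projection of a binary code `C` to a set `A` of `m`
coordinates has radius at most `1/2 - ε`, then half of `C` has radius at most
`1/2 - (m/n)ε`. -/
theorem stmt_10 (n : ℕ) (hn : 0 < n) (A : Finset (Fin n)) (ε : ℝ)
    (C : Finset (Fin n → ℝ))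
    (hbin : ∀ c ∈ C, ∀ j, c j = 0 ∨ c j = 1)
    (hproj : ∃ y : Fin n → ℝ, (∀ j, 0 ≤ y j ∧ y j ≤ 1) ∧
      ∀ c ∈ C, (1 / (A.card : ℝ)) * ∑ j ∈ A, |c j - y j| ≤ 1 / 2 - ε) :
    ∃ C' ⊆ C, (C.card : ℝ) ≤ 2 * C'.card ∧
      ∃ y : Fin n → ℝ, (∀ j, 0 ≤ y j ∧ y j ≤ 1) ∧
        ∀ c ∈ C', (1 / n : ℝ) * ∑ j, |c j - y j| ≤ 1 / 2 - ((A.card : ℝ) / n) * ε := by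
  obtain ⟨y₀, hy₀, hy₀C⟩ := hproj
  have hnR : (0:ℝ) < n := by exact_mod_cast hn
  by_cases hm : A.card = 0
  · refine ⟨C, Finset.Subset.refl _, by have := (Nat.cast_nonneg C.card : (0:ℝ) ≤ C.card); linarith,
      fun _ => 1/2, fun j => by norm_num, fun c hc => ?_⟩
    have hsum : ∑ j, |c j - 1/2| = (n:ℝ) * (1/2) := by
      rw [Finset.sum_congr rfl (fun j _ => show |c j - 1/2| = 1/2 by
        rcases hbin c hc j with h | h <;> rw [h] <;> norm_num)]
      simp [Finset.card_univ, mul_comm]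
    rw [hsum, hm]
    field_simp
    simp
  · have hmR : (0:ℝ) < A.card := by positivity
    have hcardAc : (Aᶜ.card : ℝ) = (n:ℝ) - A.card := by
      have := Finset.card_compl A
      have hle : A.card ≤ n := by simpa using A.card_le_univ
      rw [this]; simp [Fintype.card_fin]; push_cast [Nat.cast_sub hle]; ring
    set S₀ := C.filter (fun c => ∑ j ∈ Aᶜ, c j ≤ ((n:ℝ) - A.card)/2) with hS₀
    set S₁ := C.filter (fun c => ¬ (∑ j ∈ Aᶜ, c j ≤ ((n:ℝ) - A.card)/2)) with hS₁
    have hsplit : S₀.card + S₁.card = C.card := Finset.card_filter_add_card_filter_not _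
    -- key bound on the A-part
    have hApart : ∀ c ∈ C, ∑ j ∈ A, |c j - y₀ j| ≤ (A.card : ℝ) * (1/2 - ε) := by
      intro c hc
      have := hy₀C c hc
      rw [div_mul_eq_mul_div, one_mul, div_le_iff₀ hmR] at this
      linarith [this]
    have key : ∀ (b : ℝ), (b = 0 ∨ b = 1) →
        ∀ c ∈ C, ∑ j ∈ Aᶜ, |c j - b| ≤ ((n:ℝ) - A.card)/2 →
        (1 / n : ℝ) * ∑ j, |c j - (fun j => if j ∈ A then y₀ j else b) j|
          ≤ 1 / 2 - ((A.card : ℝ) / n) * ε := by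
      intro b hb c hc hcb
      have hsplitsum : ∑ j, |c j - (fun j => if j ∈ A then y₀ j else b) j|
          = ∑ j ∈ A, |c j - y₀ j| + ∑ j ∈ Aᶜ, |c j - b| := by
        rw [← Finset.sum_add_sum_compl A]
        congr 1
        · exact Finset.sum_congr rfl fun j hj => by simp [hj]
        · exact Finset.sum_congr rfl fun j hj => by
            simp [Finset.mem_compl.mp hj]
      rw [hsplitsum]
      have h1 := hApart c hc
      have htot : ∑ j ∈ A, |c j - y₀ j| + ∑ j ∈ Aᶜ, |c j - b|
          ≤ (n:ℝ)/2 - (A.card : ℝ) * ε := by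
        have : (A.card : ℝ) * (1/2 - ε) + ((n:ℝ) - A.card)/2 = (n:ℝ)/2 - A.card * ε := by ring
        linarith
      rw [one_div, inv_mul_le_iff₀ hnR]
      have : (n:ℝ) * (1/2 - (A.card:ℝ)/n * ε) = (n:ℝ)/2 - A.card * ε := by
        field_simp
      linarith
    by_cases hhalf : C.card ≤ 2 * S₀.card
    · refine ⟨S₀, Finset.filter_subset _ _, by exact_mod_cast hhalf,
        fun j => if j ∈ A then y₀ j else 0,
        fun j => by by_cases h : j ∈ A <;> simp [h, hy₀ j], fun c hc => ?_⟩
      obtain ⟨hcC, hcS⟩ := Finset.mem_filter.mp hc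
      refine key 0 (Or.inl rfl) c hcC ?_
      calc ∑ j ∈ Aᶜ, |c j - 0| = ∑ j ∈ Aᶜ, c j := by
            refine Finset.sum_congr rfl fun j _ => ?_
            rcases hbin c hcC j with h | h <;> rw [h] <;> norm_num
        _ ≤ _ := hcS
    · have hhalf' : C.card ≤ 2 * S₁.card := by omega
      refine ⟨S₁, Finset.filter_subset _ _, by exact_mod_cast hhalf',
        fun j => if j ∈ A then y₀ j else 1,
        fun j => by by_cases h : j ∈ A <;> simp [h, hy₀ j], fun c hc => ?_⟩
      obtain ⟨hcC, hcS⟩ := Finset.mem_filter.mp hc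
      push_neg at hcS
      refine key 1 (Or.inr rfl) c hcC ?_
      have heq : ∑ j ∈ Aᶜ, |c j - 1| = (Aᶜ.card : ℝ) - ∑ j ∈ Aᶜ, c j := by
        rw [Finset.sum_congr rfl (fun j _ => show |c j - 1| = 1 - c j by
          rcases hbin c hcC j with h | h <;> rw [h] <;> norm_num)]
        rw [Finset.sum_sub_distrib, Finset.sum_const, nsmul_eq_mul, mul_one]
      rw [heq, hcardAc]
      linarith
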